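/- A finite dimensional algebra over a field is simple if and only if there exists a faithful simple module over it. -/

import Mathlib

/-- A finite dimensional algebra over a field is simple if and only if
there exists a faithful simple module over it. -/
theorem stmt0.{u} (K : Type*) (A : Type u) [Field K] [Ring A] [Algebra K A]
    [FiniteDimensional K A] :
    IsSimpleRing A ↔
      ∃ (M : Type u) (_ : AddCommGroup M) (_ : Module A M),
        IsSimpleModule A M ∧ FaithfulSMul A M := by
  constructor
  · intro hA
    have hnt : Nontrivial A := inferInstance
    obtain ⟨m, hm⟩ := Ideal.exists_maximal A
    have hcoatom : IsCoatom (m : Submodule A A) := Ideal.isMaximal_def.mp hm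
    have hsimp : IsSimpleModule A (A ⧸ m) := isSimpleModule_iff_isCoatom.mpr hcoatom
    have hMnt : Nontrivial (A ⧸ m) := Submodule.Quotient.nontrivial_iff.mpr hcoatom.1
    refine ⟨A ⧸ m, inferInstance, inferInstance, hsimp, ?_⟩
    -- annihilator as a two-sided ideal
    let T : TwoSidedIdeal A := TwoSidedIdeal.mk' {a : A | ∀ v : A ⧸ m, a • v = 0}
      (fun v => by simp)
      (fun {x y} hx hy v => by rw [add_smul, hx v, hy v, add_zero])
      (fun {x} hx v => by rw [neg_smul, hx v, neg_zero])
      (fun {x y} hy v => by rw [mul_smul, hy v, smul_zero])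
      (fun {x y} hx v => by rw [mul_smul, hx _])
    rcases hA.simple.eq_bot_or_eq_top T with h | h
    · refine ⟨fun {a b} hab => ?_⟩
      have : a - b ∈ T := by
        rw [TwoSidedIdeal.mem_mk']
        intro v
        rw [sub_smul, hab v, sub_self]
      rw [h, TwoSidedIdeal.mem_bot] at this
      exact sub_eq_zero.mp this
    · exfalso
      have h1 : (1 : A) ∈ T := h ▸ TwoSidedIdeal.mem_top _
      rw [TwoSidedIdeal.mem_mk'] at h1
      obtain ⟨v, hv⟩ := exists_ne (0 : A ⧸ m)
      exact hv (by rw [← one_smul A v, h1 v])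
  · rintro ⟨M, _, _, hsimp, hfaith⟩
    have hMnt : Nontrivial M := IsSimpleModule.nontrivial A M
    obtain ⟨v0, hv0⟩ := exists_ne (0 : M)
    have hAnt : Nontrivial A := by
      refine ⟨1, 0, fun h => hv0 ?_⟩
      rw [← one_smul A v0, h, zero_smul]
    have ann : ∀ a : A, (∀ v : M, a • v = 0) → a = 0 := fun a h =>
      hfaith.eq_of_smul_eq_smul (fun v => by rw [h v, zero_smul])
    letI : Module K M := Module.compHom M (algebraMap K A)
    have ksmul : ∀ (k : K) (v : M), k • v = (algebraMap K A k) • v := fun _ _ => rfl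
    -- M is finite over K
    let π : A →ₗ[K] M :=
      { toFun := fun a => a • v0
        map_add' := fun a b => add_smul a b v0
        map_smul' := fun k a => by
          simp only [RingHom.id_apply, ksmul, Algebra.smul_def, mul_smul] }
    have hπ : Function.Surjective π := IsSimpleModule.toSpanSingleton_surjective A hv0
    have : Module.Finite K M := Module.Finite.of_surjective π hπ
    obtain ⟨n, v, hv⟩ := Module.Finite.exists_fin (R := K) (M := M)
    -- A embeds into M^n as a left A-module, hence A is a semisimple ring
    let φ : A →ₗ[A] (Fin n → M) := LinearMap.pi fun j => LinearMap.toSpanSingleton A M (v j)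
    have hφ : Function.Injective φ := by
      rw [← LinearMap.ker_eq_bot, eq_bot_iff]
      intro a ha
      have haj : ∀ j, a • v j = 0 := fun j => congr_fun (LinearMap.mem_ker.mp ha) j
      rw [Submodule.mem_bot]
      refine ann a (fun w => ?_)
      have hw : w ∈ Submodule.span K (Set.range v) := hv ▸ Submodule.mem_top
      induction hw using Submodule.span_induction with
      | mem x hx => obtain ⟨j, rfl⟩ := hx; exact haj j
      | zero => exact smul_zero a
      | add x y _ _ hx hy => rw [smul_add, hx, hy, add_zero]
      | smul k x _ hx => rw [ksmul, ← mul_smul, ← Algebra.commutes, mul_smul, hx, smul_zero]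
    have hMss : IsSemisimpleModule A M := inferInstance
    have hPiss : IsSemisimpleModule A (Fin n → M) :=
      isSemisimpleModule_of_isSemisimpleModule_submodule'
        (p := fun j => LinearMap.range (LinearMap.single A (fun _ : Fin n => M) j))
        (fun j => IsSemisimpleModule.range _) (LinearMap.iSup_range_single A _)
    have hss : IsSemisimpleRing A :=
      (LinearMap.isSemisimpleModule_iff_of_bijective φ.rangeRestrict
        ⟨fun x y hxy => hφ (Subtype.ext_iff.mp hxy), φ.surjective_rangeRestrict⟩).mpr
        inferInstance
    refine IsSimpleRing.of_eq_bot_or_eq_top (fun I => ?_)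
    by_cases hI : I = ⊥
    · exact Or.inl hI
    right
    -- I has a nonzero element
    have hex : ∃ x ∈ I, x ≠ 0 := by
      by_contra h
      push_neg at h
      exact hI (SetLike.ext fun x =>
        ⟨fun hx => (TwoSidedIdeal.mem_bot _).mpr (h x hx),
         fun hx => (((TwoSidedIdeal.mem_bot _).mp hx)) ▸ I.zero_mem⟩)
    obtain ⟨a0, ha0I, ha0⟩ := hex
    -- the set of elements of M killed by I is a submodule
    let W : Submodule A M :=
      { carrier := {w : M | ∀ i ∈ I, i • w = 0}
        add_mem' := fun {x y} hx hy i hi => by rw [smul_add, hx i hi, hy i hi, add_zero]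
        zero_mem' := fun i _ => smul_zero i
        smul_mem' := fun a w hw i hi => by
          rw [← mul_smul]; exact hw _ (I.mul_mem_right i a hi) }
    have hWne : W ≠ ⊤ := by
      intro h
      refine ha0 (ann a0 (fun w => ?_))
      exact (h ▸ (Submodule.mem_top : w ∈ ⊤) : w ∈ W) a0 ha0I
    have hW : W = ⊥ := (hsimp.eq_bot_or_eq_top W).resolve_right hWne
    -- I as a left ideal is a direct summand
    let L : Ideal A := TwoSidedIdeal.asIdeal I
    obtain ⟨J, hJ⟩ := exists_isCompl L
    have h1 : (1 : A) ∈ L ⊔ J := hJ.sup_eq_top ▸ Submodule.mem_top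
    obtain ⟨e, he, f, hf, hef⟩ := Submodule.mem_sup.mp h1
    have hfzero : f = 0 := by
      refine ann f (fun w => ?_)
      have : f • w ∈ W := by
        intro i hi
        rw [← mul_smul]
        have h1 : i * f ∈ L := TwoSidedIdeal.mem_asIdeal.mpr (I.mul_mem_right _ _ hi)
        have h2 : i * f ∈ J := by
          have := J.smul_mem i hf
          rwa [smul_eq_mul] at this
        have : i * f ∈ L ⊓ J := ⟨h1, h2⟩
        rw [hJ.inf_eq_bot, Submodule.mem_bot] at this
        rw [this, zero_smul]
      rw [hW, Submodule.mem_bot] at this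
      exact this
    have h1I : (1 : A) ∈ I := by
      have : (1 : A) = e := by rw [← hef, hfzero, add_zero]
      rw [this]
      exact TwoSidedIdeal.mem_asIdeal.mp he
    exact I.eq_top h1I
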